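/- Let n ≥ 3 and let λ = (λ_1, …, λ_r) be a partition of n such that either r = 1 (i.e. λ = (n)) or λ_1 ≥ λ_2 + 2. Let λ' = (λ_1−2, λ_2, …, λ_r) be the partition of n−2 obtained from λ by removing the last two cells of the first row. Then |η_λ| > |η_{λ'}|. -/

import Mathlib

/-- Derangement numbers: `D 0 = 1`, `D (m+1) = (m+1) * D m + (-1)^(m+1)`. -/
def derange : ℕ → ℤ
  | 0 => 1
  | n + 1 => (n + 1 : ℤ) * derange n + (-1) ^ (n + 1)

/-- Subtract one from every part and discard the parts that become zero
(deleting the first column of the Ferrers diagram). -/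
def strip (l : List ℕ) : List ℕ := (l.map (· - 1)).filter (fun x => 0 < x)

lemma strip_measure (l : List ℕ) : (strip l).sum + (strip l).length ≤ l.sum := by
  induction l with
  | nil => simp [strip]
  | cons x t ih =>
      simp only [strip, List.map_cons, List.filter_cons] at ih ⊢
      by_cases hx : 0 < x - 1 <;> simp [hx] <;> omega

/-- The eigenvalues of the derangement graph, defined by Renteln's recurrence:
`η ∅ = 1` and `η λ = (-1)^h (η (λ-ĥ) + (-1)^{λ₁} h η (λ-ĉ))`, where
`h = λ₁ + r - 1` is the hook size, `λ-ĥ = strip (tail λ)` removes the hook,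
and `λ-ĉ = strip λ` removes the first column. -/
def eta : List ℕ → ℤ
  | [] => 1
  | a :: t =>
      (-1) ^ (a + t.length) *
        (eta (strip t) + (-1) ^ a * ((a : ℤ) + t.length) * eta (strip (a :: t)))
  termination_by l => l.sum + l.length
  decreasing_by
  · have h1 := strip_measure t
    simp only [List.sum_cons, List.length_cons]
    omega
  · have h1 := strip_measure (a :: t)
    simp only [List.sum_cons, List.length_cons] at h1 ⊢
    omega

/-- `l` is (the list of parts of) a partition of `n`: weakly decreasing,
all parts positive, summing to `n`. -/
def IsPartition (n : ℕ) (l : List ℕ) : Prop :=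
  l.Pairwise (· ≥ ·) ∧ (∀ x ∈ l, 0 < x) ∧ l.sum = n

/-- The hook partition `(a, 1^(n-a))` of `n`. -/
def hookP (n a : ℕ) : List ℕ := a :: List.replicate (n - a) 1

lemma eta_nil : eta [] = 1 := by rw [eta]

lemma eta_cons_eq (a : ℕ) (t : List ℕ) : eta (a :: t) =
    (-1) ^ (a + t.length) *
      (eta (strip t) + (-1) ^ a * ((a : ℤ) + t.length) * eta (strip (a :: t))) := by
  rw [eta]

-- strip lemmas
lemma strip_nil : strip [] = [] := rfl

lemma strip_cons_of_two_le {a : ℕ} (t : List ℕ) (ha : 2 ≤ a) :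
    strip (a :: t) = (a - 1) :: strip t := by
  simp only [strip, List.map_cons, List.filter_cons]
  have : 0 < a - 1 := by omega
  simp [this]

lemma strip_eq_nil {l : List ℕ} (h : ∀ y ∈ l, y ≤ 1) : strip l = [] := by
  induction l with
  | nil => rfl
  | cons a t ih =>
      simp only [strip, List.map_cons, List.filter_cons]
      have ha : a ≤ 1 := h a (by simp)
      have h0 : ¬ (0 < a - 1) := by omega
      rw [if_neg (by simpa using h0)]
      exact ih (fun y hy => h y (by simp [hy]))

lemma mem_strip_pos {l : List ℕ} {y : ℕ} (hy : y ∈ strip l) : 0 < y := by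
  simp only [strip, List.mem_filter] at hy
  exact of_decide_eq_true hy.2

lemma strip_sorted {l : List ℕ} (h : l.Pairwise (· ≥ ·)) : (strip l).Pairwise (· ≥ ·) := by
  apply List.Pairwise.filter
  exact h.map _ (fun a b hab => Nat.sub_le_sub_right hab 1)

lemma strip_sum_le (l : List ℕ) : (strip l).sum ≤ l.sum := by
  have := strip_measure l; omega

lemma sorted_le_head {a : ℕ} {t : List ℕ} (h : (a :: t).Pairwise (· ≥ ·)) :
    ∀ y ∈ t, y ≤ a := (List.pairwise_cons.mp h).1

lemma strip_drop {v : List ℕ} (hs : v.Pairwise (· ≥ ·)) :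
    ∀ k, strip (v.drop k) = (strip v).drop k := by
  induction v with
  | nil => intro k; simp [strip_nil]
  | cons a t ih =>
      intro k
      cases k with
      | zero => simp
      | succ k =>
          rw [List.drop_succ_cons, ih (List.pairwise_cons.mp hs).2 k]
          by_cases ha : 2 ≤ a
          · rw [strip_cons_of_two_le t ha, List.drop_succ_cons]
          · have h1 : ∀ y ∈ (a :: t), y ≤ 1 := by
              intro y hy
              rcases List.mem_cons.mp hy with rfl | hy
              · omega
              · have := sorted_le_head hs y hy; omega
            have h2 : strip t = [] := strip_eq_nil (fun y hy => h1 y (by simp [hy]))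
            rw [strip_eq_nil h1, h2]
            simp

-- absolute value bounds
lemma abs_eta_cons (a : ℕ) (t : List ℕ) : |eta (a :: t)| =
    |eta (strip t) + (-1) ^ a * ((a : ℤ) + t.length) * eta (strip (a :: t))| := by
  rw [eta_cons_eq, abs_mul, abs_pow, abs_neg, abs_one, one_pow, one_mul]

lemma eta_cons_upper (a : ℕ) (t : List ℕ) :
    |eta (a :: t)| ≤ ((a : ℤ) + t.length) * |eta (strip (a :: t))| + |eta (strip t)| := by
  rw [abs_eta_cons]
  calc |eta (strip t) + (-1) ^ a * ((a : ℤ) + t.length) * eta (strip (a :: t))|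
      ≤ |eta (strip t)| + |(-1) ^ a * ((a : ℤ) + t.length) * eta (strip (a :: t))| :=
        abs_add_le _ _
    _ = ((a : ℤ) + t.length) * |eta (strip (a :: t))| + |eta (strip t)| := by
        rw [abs_mul, abs_mul, abs_pow, abs_neg, abs_one, one_pow, one_mul,
          abs_of_nonneg (by positivity : (0:ℤ) ≤ (a : ℤ) + t.length)]
        ring

lemma eta_cons_lower (a : ℕ) (t : List ℕ) :
    ((a : ℤ) + t.length) * |eta (strip (a :: t))| - |eta (strip t)| ≤ |eta (a :: t)| := by
  rw [abs_eta_cons]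
  have h1 : |(-1 : ℤ) ^ a * ((a : ℤ) + t.length) * eta (strip (a :: t))|
      = ((a : ℤ) + t.length) * |eta (strip (a :: t))| := by
    rw [abs_mul, abs_mul, abs_pow, abs_neg, abs_one, one_pow, one_mul,
      abs_of_nonneg (by positivity : (0:ℤ) ≤ (a : ℤ) + t.length)]
  have h2 : |(-1 : ℤ) ^ a * ((a : ℤ) + t.length) * eta (strip (a :: t))| - |(-(eta (strip t)))|
      ≤ |(-1 : ℤ) ^ a * ((a : ℤ) + t.length) * eta (strip (a :: t)) - (-(eta (strip t)))| :=
    abs_sub_abs_le_abs_sub _ _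
  rw [abs_neg, sub_neg_eq_add, h1] at h2
  have h3 : (-1 : ℤ) ^ a * ((a : ℤ) + t.length) * eta (strip (a :: t)) + eta (strip t)
      = eta (strip t) + (-1) ^ a * ((a : ℤ) + t.length) * eta (strip (a :: t)) := by ring
  rw [h3] at h2
  linarith

-- all-ones lists
lemma eta_ones {l : List ℕ} (hs : l.Pairwise (· ≥ ·)) (hp : ∀ y ∈ l, 0 < y)
    (h1 : l.headI ≤ 1) (hne : l ≠ []) : |eta l| = (l.length : ℤ) - 1 := by
  rcases l with _ | ⟨a, t⟩
  · exact absurd rfl hne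
  · have ha : a = 1 := by
      have := hp a (by simp); simp only [List.headI] at h1; omega
    subst ha
    have hall : ∀ y ∈ (1 :: t), y ≤ 1 := by
      intro y hy
      rcases List.mem_cons.mp hy with rfl | hy
      · exact le_refl 1
      · exact sorted_le_head hs y hy
    have hst : strip t = [] := strip_eq_nil (fun y hy => hall y (by simp [hy]))
    have hsl : strip (1 :: t) = [] := strip_eq_nil hall
    rw [abs_eta_cons, hst, hsl, eta_nil]
    have hcast : (1:ℤ) + (-1) ^ (1:ℕ) * (((1:ℕ) : ℤ) + (t.length : ℤ)) * 1
        = -(t.length : ℤ) := by push_cast; ring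
    rw [hcast, abs_neg, abs_of_nonneg (by positivity : (0:ℤ) ≤ (t.length : ℤ))]
    simp only [List.length_cons]
    push_cast
    ring

-- hooks / derangement numbers
lemma neg_one_pow_cases (m : ℕ) : (-1:ℤ)^m = 1 ∨ (-1:ℤ)^m = -1 := by
  rcases Nat.even_or_odd m with h | h
  · left; exact h.neg_one_pow
  · right; exact h.neg_one_pow

lemma derange_succ_eq (n : ℕ) :
    derange (n+1) = ((n:ℤ)+1) * derange n + (-1)^(n+1) := by
  rw [derange]

lemma eta_single : ∀ n : ℕ, eta [n] = derange n := by
  intro n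
  induction n using Nat.strong_induction_on with
  | _ n ih =>
    match n with
    | 0 =>
        rw [eta_cons_eq]
        simp [strip_nil, derange, eta_nil, strip]
    | 1 =>
        rw [eta_cons_eq]
        have h1 : strip [1] = [] := strip_eq_nil (by simp)
        simp [h1, strip_nil, eta_nil, derange]
    | (n+2) =>
        rw [eta_cons_eq]
        have h1 : strip [n+2] = [n+1] := by
          have := strip_cons_of_two_le ([] : List ℕ) (show 2 ≤ n+2 by omega)
          simpa [strip_nil] using this
        rw [h1, ih (n+1) (by omega), derange_succ_eq (n+1)]
        simp only [List.length_nil, strip_nil, eta_nil, Nat.add_zero]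
        rcases neg_one_pow_cases (n+2) with hp | hp <;>
          · rw [show n+1+1 = n+2 from rfl, hp]
            push_cast
            ring

lemma derange_lb : ∀ n : ℕ, 0 ≤ derange n ∧ (n:ℤ) - 1 ≤ derange n := by
  intro n
  induction n with
  | zero => simp [derange]
  | succ m ih =>
      match m, ih with
      | 0, ih => constructor <;> norm_num [derange]
      | 1, ih => constructor <;> norm_num [derange]
      | (k+2), ih =>
          have h1 : (k:ℤ) + 1 ≤ derange (k+2) := by
            have := ih.2; push_cast at this ⊢; linarith
          have h0 : (0:ℤ) ≤ derange (k+2) := ih.1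
          rw [derange_succ_eq (k+2)]
          rcases neg_one_pow_cases (k+2+1) with h | h <;> rw [h] <;> constructor <;>
            push_cast <;> nlinarith

lemma derange_pos {n : ℕ} (h : n ≠ 1) : 1 ≤ derange n := by
  match n with
  | 0 => norm_num [derange]
  | 1 => omega
  | (k+2) =>
      have := (derange_lb (k+2)).2
      push_cast at this
      linarith

lemma derange_succ_step {n : ℕ} (h : 1 ≤ n) : derange n + 1 ≤ derange (n+1) := by
  match n with
  | 1 => norm_num [derange]
  | (k+2) =>
      have h1 : 1 ≤ derange (k+2) := derange_pos (by omega)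
      rw [derange_succ_eq (k+2)]
      rcases neg_one_pow_cases (k+2+1) with h2 | h2 <;> rw [h2] <;> push_cast <;> nlinarith

lemma derange_step {n : ℕ} (h : 1 ≤ n) : derange n + 2 ≤ derange (n+2) := by
  have h1 := derange_succ_step h
  have h2 := derange_succ_step (show 1 ≤ n+1 by omega)
  have : n+1+1 = n+2 := rfl
  rw [this] at h2
  linarith

lemma derange_two_le {n : ℕ} (h : 3 ≤ n) : 2 ≤ derange n := by
  have h2 := (derange_lb n).2
  have h3 : (3:ℤ) ≤ (n:ℤ) := by exact_mod_cast h
  linarith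

lemma sorted_le_headI {l : List ℕ} (h : l.Pairwise (· ≥ ·)) {z : ℕ} (hz : z ∈ l) :
    z ≤ l.headI := by
  rcases l with _ | ⟨a, t⟩
  · simp at hz
  · rcases List.mem_cons.mp hz with rfl | hz
    · exact le_refl _
    · exact sorted_le_head h z hz

set_option maxHeartbeats 1000000 in
lemma master : ∀ (M : ℕ) (x : ℕ) (v : List ℕ),
    x + v.sum ≤ M →
    v.Pairwise (· ≥ ·) → (∀ y ∈ v, 0 < y) → v.headI + 2 ≤ x → 3 ≤ x →
    (∀ k : ℕ, |eta (v.drop k)| + |eta (strip (v.drop k))| ≤ |eta (x :: v)|) ∧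
    |eta ((x - 2) :: v)| + 2 ≤ |eta (x :: v)| := by
  intro M
  induction M using Nat.strong_induction_on with
  | _ M ih =>
  intro x v hM hs hp hgap hx3
  by_cases hv : v = []
  · -- empty tail: hooks [x]
    subst hv
    have hD0 := (derange_lb x).1
    have hT : |eta [x]| = derange x := by rw [eta_single, abs_of_nonneg hD0]
    have h2x : 2 ≤ derange x := derange_two_le hx3
    constructor
    · intro k
      rw [List.drop_nil, strip_nil, eta_nil, hT]
      norm_num
      linarith
    · obtain ⟨y, rfl⟩ : ∃ y, x = y + 3 := ⟨x - 3, by omega⟩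
      have hD2 := (derange_lb (y+1)).1
      have hT2 : |eta [y+3-2]| = derange (y+1) := by
        show |eta [y+1]| = _
        rw [eta_single, abs_of_nonneg hD2]
      rw [hT, hT2]
      have := derange_step (show 1 ≤ y+1 by omega)
      have he : y+1+2 = y+3 := by omega
      rw [he] at this
      linarith
  · by_cases hone : v.headI ≤ 1
    · -- all-ones tail
      have hall : ∀ y ∈ v, y ≤ 1 := by
        rcases v with _ | ⟨a, t⟩
        · exact absurd rfl hv
        · intro y hy
          rcases List.mem_cons.mp hy with rfl | hy
          · simpa using hone
          · have := sorted_le_head hs y hy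
            simp only [List.headI] at hone
            omega
      have hsv : strip v = [] := strip_eq_nil hall
      have hx2 : 2 ≤ x := by omega
      have hsl : strip (x :: v) = [x-1] := by
        rw [strip_cons_of_two_le v hx2, hsv]
      have hD1 : 1 ≤ derange (x-1) := derange_pos (by omega)
      have hD1' := (derange_lb (x-1)).1
      have hNs : |eta (strip (x :: v))| = derange (x-1) := by
        rw [hsl, eta_single, abs_of_nonneg hD1']
      have hT : ((x:ℤ) + v.length) * derange (x-1) - 1 ≤ |eta (x :: v)| := by
        have := eta_cons_lower x v
        rw [hNs, hsv, eta_nil, abs_one] at this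
        exact this
      have hm1 : 1 ≤ v.length := by
        rcases v with _ | _
        · exact absurd rfl hv
        · simp
      have hTlb : (v.length : ℤ) + 2 ≤ |eta (x :: v)| := by
        have hx3' : (3:ℤ) ≤ (x:ℤ) := by exact_mod_cast hx3
        nlinarith [hT, hD1, (by positivity : (0:ℤ) ≤ (v.length:ℤ))]
      constructor
      · intro k
        by_cases hτ : v.drop k = []
        · rw [hτ, strip_nil, eta_nil, abs_one]
          have : (0:ℤ) ≤ (v.length : ℤ) := by positivity
          linarith
        · have hτs : (v.drop k).Pairwise (· ≥ ·) := hs.drop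
          have hτp : ∀ y ∈ v.drop k, 0 < y := fun y hy => hp y (List.drop_subset _ _ hy)
          have hτ1 : (v.drop k).headI ≤ 1 := by
            rcases h : v.drop k with _ | ⟨d, s⟩
            · exact absurd h hτ
            · have hd : d ∈ v.drop k := by rw [h]; simp
              have := hall d (List.drop_subset _ _ hd)
              simpa using this
          have hτall : ∀ y ∈ v.drop k, y ≤ 1 :=
            fun y hy => hall y (List.drop_subset _ _ hy)
          rw [eta_ones hτs hτp hτ1 hτ, strip_eq_nil hτall, eta_nil, abs_one]
          have hlen : ((v.drop k).length : ℤ) ≤ (v.length : ℤ) := by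
            rw [List.length_drop]
            exact_mod_cast Nat.sub_le _ _
          linarith
      · -- B part
        rcases Nat.lt_or_ge x 4 with hx4 | hx4
        · -- x = 3
          obtain rfl : x = 3 := by omega
          have hones : ((3-2) :: v).Pairwise (· ≥ ·) := by
            show ((1:ℕ) :: v).Pairwise (· ≥ ·)
            rw [List.pairwise_cons]
            exact ⟨fun y hy => hall y hy, hs⟩
          have hpos : ∀ y ∈ ((3-2) :: v), 0 < y := by
            intro y hy
            rcases List.mem_cons.mp hy with rfl | hy
            · norm_num
            · exact hp y hy
          have h1 : ((3-2:ℕ) :: v).headI ≤ 1 := by norm_num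
          rw [eta_ones hones hpos h1 (by simp)]
          simp only [List.length_cons]
          have : ((v.length + 1 : ℕ) : ℤ) = (v.length : ℤ) + 1 := by push_cast; ring
          rw [this]
          have h3 : ((3:ℕ):ℤ) = 3 := by norm_num
          linarith [hTlb]
        · -- x ≥ 4
          obtain ⟨y, rfl⟩ : ∃ y, x = y + 4 := ⟨x - 4, by omega⟩
          have hs3 : strip ((y+4-2) :: v) = [y+1] := by
            show strip ((y+2) :: v) = _
            rw [strip_cons_of_two_le v (by omega), hsv]
            norm_num
          have hD3 := (derange_lb (y+1)).1
          have hup : |eta ((y+4-2) :: v)| ≤ (((y:ℤ)+2) + v.length) * derange (y+1) + 1 := by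
            have := eta_cons_upper (y+4-2) v
            rw [hs3, hsv, eta_nil, abs_one, eta_single, abs_of_nonneg hD3] at this
            have hc : ((y+4-2 : ℕ) : ℤ) = (y:ℤ) + 2 := by push_cast; ring
            rw [hc] at this
            exact this
          have hstep : derange (y+1) + 2 ≤ derange (y+3) := by
            have := derange_step (show 1 ≤ y+1 by omega)
            have he : y+1+2 = y+3 := by omega
            rwa [he] at this
          have hT' : ((y:ℤ)+4 + v.length) * derange (y+3) - 1 ≤ |eta ((y+4) :: v)| := by
            have hD1'' := (derange_lb (y+3)).1
            have : |eta (strip ((y+4) :: v))| = derange (y+3) := by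
              have he : y+4-1 = y+3 := by omega
              rw [hsl, he, eta_single, abs_of_nonneg hD1'']
            have h2 := eta_cons_lower (y+4) v
            rw [this, hsv, eta_nil, abs_one] at h2
            have hc : ((y+4 : ℕ) : ℤ) = (y:ℤ) + 4 := by push_cast; ring
            rw [hc] at h2
            exact h2
          have hml : (0:ℤ) ≤ (v.length : ℤ) := by positivity
          have hy0 : (0:ℤ) ≤ (y:ℤ) := by positivity
          nlinarith [hup, hT', hstep, hD3, hml, hy0]
    · -- main branch: v₁ ≥ 2
      rcases v with _ | ⟨c, ρ⟩
      · exact absurd rfl hv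
      have hc2 : 2 ≤ c := by simp only [List.headI] at hone; omega
      have hx4 : 4 ≤ x := by simp only [List.headI] at hgap; omega
      obtain ⟨y, rfl⟩ : ∃ y, x = y + 4 := ⟨x - 4, by omega⟩
      have hsρ : ρ.Pairwise (· ≥ ·) := (List.pairwise_cons.mp hs).2
      set W := strip (c :: ρ) with hWdef
      have hWc : W = (c-1) :: strip ρ := strip_cons_of_two_le ρ hc2
      have hsx : strip ((y+4) :: c :: ρ) = (y+3) :: W := by
        rw [hWdef, strip_cons_of_two_le (c :: ρ) (by omega)]
        norm_num
      have hM1 : 1 ≤ M := by omega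
      have hmeas : (y+3) + W.sum ≤ M - 1 := by
        have h1 := strip_sum_le (c :: ρ)
        rw [← hWdef] at h1
        simp only [List.sum_cons] at h1 hM
        omega
      have hgap' : W.headI + 2 ≤ y + 3 := by
        rw [hWc]
        simp only [List.headI, List.headI] at hgap ⊢
        omega
      obtain ⟨IHA, IHB⟩ := ih (M-1) (by omega) (y+3) W hmeas
        (strip_sorted hs) (fun z hz => mem_strip_pos hz) hgap' (by omega)
      -- abbreviations
      have hA'0 : (0:ℤ) ≤ |eta ((y+3) :: W)| := abs_nonneg _
      have hB0 : (0:ℤ) ≤ |eta W| := abs_nonneg _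
      have hBA : |eta W| ≤ |eta ((y+3) :: W)| := by
        have h0 := IHA 0
        rw [List.drop_zero] at h0
        have := abs_nonneg (eta (strip W))
        linarith
      have hA2 : (2:ℤ) ≤ |eta ((y+3) :: W)| := by
        have h0 := IHA W.length
        rw [List.drop_length, strip_nil, eta_nil] at h0
        simpa using h0
      have hT : ((y:ℤ)+4+((ρ.length:ℤ)+1)) * |eta ((y+3) :: W)| - |eta W|
          ≤ |eta ((y+4) :: c :: ρ)| := by
        have h1 := eta_cons_lower (y+4) (c :: ρ)
        rw [hsx, ← hWdef] at h1
        simp only [List.length_cons] at h1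
        push_cast at h1
        linarith
      constructor
      · intro k
        cases k with
        | zero =>
            rw [List.drop_zero]
            have hNv := eta_cons_upper c ρ
            rw [← hWdef] at hNv
            have hCA : |eta (strip ρ)| ≤ |eta ((y+3) :: W)| := by
              have h1 := IHA 1
              rw [hWc] at h1
              simp only [List.drop_succ_cons, List.drop_zero] at h1
              rw [← hWc] at h1
              have := abs_nonneg (eta (strip (strip ρ)))
              linarith
            have e1 : ((c:ℤ)+ρ.length+1) * |eta W| ≤ ((c:ℤ)+ρ.length+1) * |eta ((y+3) :: W)| := by
              apply mul_le_mul_of_nonneg_left hBA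
              positivity
            have e2 : ((c:ℤ)+ρ.length+2) * |eta ((y+3) :: W)|
                ≤ ((y:ℤ)+4+ρ.length) * |eta ((y+3) :: W)| := by
              apply mul_le_mul_of_nonneg_right _ hA'0
              have : (c:ℤ) + 2 ≤ (y:ℤ) + 4 := by exact_mod_cast hgap
              linarith
            linarith [hNv, hT, hCA, e1, e2, hBA]
        | succ k =>
            rw [List.drop_succ_cons]
            by_cases hτe : ρ.drop k = []
            · rw [hτe, strip_nil, eta_nil, abs_one]
              have e3 : ((y:ℤ)+3+ρ.length) * 2 ≤ ((y:ℤ)+3+ρ.length) * |eta ((y+3) :: W)| := by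
                apply mul_le_mul_of_nonneg_left hA2
                positivity
              linarith [hT, hBA, e3]
            · by_cases hτ1 : (ρ.drop k).headI ≤ 1
              · have hτs : (ρ.drop k).Pairwise (· ≥ ·) := hsρ.drop
                have hτp : ∀ z ∈ ρ.drop k, 0 < z :=
                  fun z hz => hp z (by simp [List.drop_subset _ _ hz])
                have hτall : ∀ z ∈ ρ.drop k, z ≤ 1 := by
                  intro z hz
                  have := sorted_le_headI hτs hz
                  omega
                rw [eta_ones hτs hτp hτ1 hτe, strip_eq_nil hτall, eta_nil, abs_one]
                have hlen : (((ρ.drop k).length:ℤ)) ≤ (ρ.length:ℤ) := by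
                  rw [List.length_drop]
                  exact_mod_cast Nat.sub_le _ _
                have e3 : ((y:ℤ)+3+ρ.length) * 2 ≤ ((y:ℤ)+3+ρ.length) * |eta ((y+3) :: W)| := by
                  apply mul_le_mul_of_nonneg_left hA2
                  positivity
                linarith [hT, hBA, e3]
              · obtain ⟨d, s, hτd⟩ := List.exists_cons_of_ne_nil hτe
                have hd2 : 2 ≤ d := by
                  rw [hτd] at hτ1
                  simp only [List.headI] at hτ1
                  omega
                have hdc : d ≤ c := by
                  have hdm : d ∈ ρ := by
                    apply List.drop_subset k ρ
                    rw [hτd]; simp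
                  exact sorted_le_head hs d hdm
                have hup := eta_cons_upper d s
                have hstτ : strip (d :: s) = W.drop (k+1) := by
                  have h1 := strip_drop hs (k+1)
                  rw [List.drop_succ_cons, hτd] at h1
                  rw [h1, hWdef]
                have hsval : s = ρ.drop (k+1) := by
                  have h1 : (ρ.drop k).drop 1 = ρ.drop (k+1) := by rw [List.drop_drop]
                  rw [hτd] at h1
                  simpa using h1
                have hss : strip s = W.drop (k+2) := by
                  have h1 := strip_drop hs (k+2)
                  rw [show k+2 = (k+1)+1 from rfl, List.drop_succ_cons, ← hsval] at h1
                  rw [h1, hWdef]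
                have hP : |eta (W.drop (k+1))| ≤ |eta ((y+3) :: W)| := by
                  have h1 := IHA (k+1)
                  have := abs_nonneg (eta (strip (W.drop (k+1))))
                  linarith
                have hQ : |eta (W.drop (k+2))| ≤ |eta ((y+3) :: W)| := by
                  have h1 := IHA (k+2)
                  have := abs_nonneg (eta (strip (W.drop (k+2))))
                  linarith
                have hklen : k < ρ.length := by
                  by_contra hcon
                  push_neg at hcon
                  rw [List.drop_eq_nil_of_le hcon] at hτd
                  exact (List.cons_ne_nil d s) hτd.symm
                have hslen : s.length + (k+1) = ρ.length := by
                  rw [hsval, List.length_drop]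
                  omega
                rw [hτd, hstτ]
                have hcoef : ((d:ℤ) + s.length + 1) ≤ (y:ℤ) + 2 + ρ.length := by
                  have h1 : (d:ℤ) ≤ (c:ℤ) := by exact_mod_cast hdc
                  have h2 : (c:ℤ) + 2 ≤ (y:ℤ) + 4 := by exact_mod_cast hgap
                  have h3 : (s.length:ℤ) + (k:ℤ) + 1 = (ρ.length:ℤ) := by exact_mod_cast hslen
                  have h4 : (0:ℤ) ≤ (k:ℤ) := by positivity
                  linarith
                have e1 : ((d:ℤ) + s.length + 1) * |eta (W.drop (k+1))|
                    ≤ ((d:ℤ) + s.length + 1) * |eta ((y+3) :: W)| := by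
                  apply mul_le_mul_of_nonneg_left hP
                  positivity
                have e2 : ((d:ℤ) + s.length + 1) * |eta ((y+3) :: W)|
                    ≤ ((y:ℤ) + 2 + ρ.length) * |eta ((y+3) :: W)| :=
                  mul_le_mul_of_nonneg_right hcoef hA'0
                rw [hstτ, hss] at hup
                linarith [hup, hT, hQ, hBA, e1, e2]
      · -- B part
        rw [show y+4-2 = y+2 by omega]
        have hs2 : strip ((y+2) :: c :: ρ) = (y+1) :: W := by
          rw [hWdef, strip_cons_of_two_le (c :: ρ) (by omega)]
          norm_num
        have hup2 := eta_cons_upper (y+2) (c :: ρ)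
        rw [hs2, ← hWdef] at hup2
        have hIB : |eta ((y+1) :: W)| + 2 ≤ |eta ((y+3) :: W)| := by
          have := IHB
          norm_num at this
          exact this
        simp only [List.length_cons] at hup2
        push_cast at hup2
        have e4 : ((y:ℤ) + 2 + (ρ.length + 1)) * |eta ((y+1) :: W)|
            ≤ ((y:ℤ) + 2 + (ρ.length + 1)) * (|eta ((y+3) :: W)| - 2) := by
          apply mul_le_mul_of_nonneg_left (by linarith) (by positivity)
        linarith [hup2, hT, hBA, e4, hA'0, abs_nonneg (eta ((y+1) :: W))]

/-- For `n ≥ 3` and a partition `λ ⊢ n` with one part or `λ₁ ≥ λ₂ + 2`,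
removing two cells from the first row strictly decreases `|η|`. -/
theorem eta_abs_remove_two_cells (n : ℕ) (hn : 3 ≤ n)
    (l : List ℕ) (hl : IsPartition n l)
    (hcond : l.length = 1 ∨ l.tail.headI + 2 ≤ l.headI) :
    |eta ((l.headI - 2) :: l.tail)| < |eta l| := by
  obtain ⟨hs, hp, hsum⟩ := hl
  rcases l with _ | ⟨x, t⟩
  · simp at hsum; omega
  simp only [List.headI, List.tail_cons]
  have hst : t.Pairwise (· ≥ ·) := (List.pairwise_cons.mp hs).2
  have hpt : ∀ y ∈ t, 0 < y := fun y hy => hp y (by simp [hy])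
  have hsum' : x + t.sum = n := by simpa using hsum
  have hgap : t.headI + 2 ≤ x := by
    rcases hcond with hlen | hcond
    · have ht : t = [] := by
        simp only [List.length_cons] at hlen
        exact List.eq_nil_of_length_eq_zero (by omega)
      subst ht
      have h0 : ([] : List ℕ).headI = 0 := rfl
      rw [h0]
      simp only [List.sum_nil] at hsum'
      omega
    · simpa using hcond
  have hx3 : 3 ≤ x := by
    rcases t with _ | ⟨a, t'⟩
    · simp only [List.sum_nil] at hsum'; omega
    · have ha : 0 < a := hpt a (by simp)
      simp only [List.headI] at hgap
      omega
  have hB := (master (x + t.sum) x t le_rfl hst hpt hgap hx3).2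
  linarith
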